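/- arXiv:2009.09894 — 2 statements merged into one kernel-verified Lean document; each statement's English description precedes it below -/
import Mathlib

section
/- Let f_R, f_A : [0,∞) → ℝ be continuously differentiable and bounded, with bounded derivatives, and with f_R(r) = f_A(r) = 0 for all r ≥ 1/2. Fix 0 < η_min < η_max and χ ∈ [0,1]. Then there exists a constant C_u > 0 such that for all d ∈ ℝ², all θ, θ̄ ∈ ℝ, and all η, η̄ ∈ [η_min, η_max]: |F(d,(θ,η)) − F(d,(θ̄,η̄))| ≤ C_u (|θ − θ̄| + |η − η̄|). -/
open Real Matrix

/-- The rotation matrix `R_θ`. -/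
noncomputable def rotM (θ : ℝ) : Matrix (Fin 2) (Fin 2) ℝ :=
  !![cos θ, -sin θ; sin θ, cos θ]

/-- The tensor `T(θ) = R_θ · diag(1,χ) · R_θᵀ`. -/
noncomputable def TmatM (θ χ : ℝ) : Matrix (Fin 2) (Fin 2) ℝ :=
  rotM θ * !![(1 : ℝ), 0; 0, χ] * (rotM θ)ᵀ

/-- The repulsion force `F_R(d,(θ,η)) = η f_R(η|d|) d`. -/
noncomputable def forceR (fR : ℝ → ℝ) (η : ℝ) (d : EuclideanSpace ℝ (Fin 2)) :
    EuclideanSpace ℝ (Fin 2) :=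
  (η * fR (η * ‖d‖)) • d

/-- The attraction force `F_A(d,(θ,η)) = η f_A(η|d|) T(θ) d`. -/
noncomputable def forceA (fA : ℝ → ℝ) (χ θ η : ℝ) (d : EuclideanSpace ℝ (Fin 2)) :
    EuclideanSpace ℝ (Fin 2) :=
  (η * fA (η * ‖d‖)) • (WithLp.toLp 2 ((TmatM θ χ).mulVec d) : EuclideanSpace ℝ (Fin 2))

/-- The total force `F = F_R + F_A`. -/
noncomputable def forceTot (fR fA : ℝ → ℝ) (χ θ η : ℝ) (d : EuclideanSpace ℝ (Fin 2)) :
    EuclideanSpace ℝ (Fin 2) :=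
  forceR fR η d + forceA fA χ θ η d

/- ### Auxiliary lemmas -/

lemma aux_abs_cos_sub_cos (a b : ℝ) : |cos a - cos b| ≤ |a - b| := by
  rw [Real.cos_sub_cos]
  have h1 : |sin ((a + b) / 2)| ≤ 1 := abs_sin_le_one _
  have h2 : |sin ((a - b) / 2)| ≤ |(a - b) / 2| := Real.abs_sin_le_abs
  have h3 : |(a - b) / 2| = |a - b| / 2 := by rw [abs_div]; norm_num
  rw [abs_mul, abs_mul]
  rw [h3] at h2
  have : |(-2 : ℝ)| = 2 := by norm_num
  rw [this]
  nlinarith [abs_nonneg (sin ((a + b) / 2)), abs_nonneg (sin ((a - b) / 2)), abs_nonneg (a - b)]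

lemma aux_abs_sin_sub_sin (a b : ℝ) : |sin a - sin b| ≤ |a - b| := by
  rw [Real.sin_sub_sin]
  have h1 : |cos ((a + b) / 2)| ≤ 1 := abs_cos_le_one _
  have h2 : |sin ((a - b) / 2)| ≤ |(a - b) / 2| := Real.abs_sin_le_abs
  have h3 : |(a - b) / 2| = |a - b| / 2 := by rw [abs_div]; norm_num
  rw [abs_mul, abs_mul]
  rw [h3] at h2
  have : |(2 : ℝ)| = 2 := by norm_num
  rw [this]
  nlinarith [abs_nonneg (sin ((a - b) / 2)), abs_nonneg (cos ((a + b) / 2)), abs_nonneg (a - b)]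

lemma aux_coord_abs_le_norm (v : EuclideanSpace ℝ (Fin 2)) (i : Fin 2) : |v i| ≤ ‖v‖ := by
  rw [EuclideanSpace.norm_eq, ← Real.sqrt_sq_eq_abs]
  apply Real.sqrt_le_sqrt
  have := Finset.single_le_sum (f := fun j => ‖v j‖ ^ 2) (fun j _ => by positivity)
    (Finset.mem_univ i)
  simpa [Real.norm_eq_abs, sq_abs] using this

lemma aux_norm_le_abs_add (v : EuclideanSpace ℝ (Fin 2)) : ‖v‖ ≤ |v 0| + |v 1| := by
  rw [EuclideanSpace.norm_eq, Fin.sum_univ_two]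
  have h : ‖v 0‖ ^ 2 + ‖v 1‖ ^ 2 ≤ (|v 0| + |v 1|) ^ 2 := by
    simp only [Real.norm_eq_abs]
    nlinarith [abs_nonneg (v 0), abs_nonneg (v 1)]
  calc √(‖v 0‖ ^ 2 + ‖v 1‖ ^ 2) ≤ √((|v 0| + |v 1|) ^ 2) := Real.sqrt_le_sqrt h
    _ = |v 0| + |v 1| := Real.sqrt_sq (by positivity)

/-- A cast from plain functions to Euclidean space, to fix the norm instance. -/
abbrev toE2 (x : Fin 2 → ℝ) : EuclideanSpace ℝ (Fin 2) := WithLp.toLp 2 x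

lemma aux_mulVec_apply2 (A : Matrix (Fin 2) (Fin 2) ℝ) (d : Fin 2 → ℝ) (i : Fin 2) :
    A.mulVec d i = A i 0 * d 0 + A i 1 * d 1 := by
  simp [Matrix.mulVec, dotProduct, Fin.sum_univ_two]

lemma aux_mulVec_norm_le (A : Matrix (Fin 2) (Fin 2) ℝ) (d : EuclideanSpace ℝ (Fin 2)) :
    ‖toE2 (A.mulVec d)‖ ≤ (|A 0 0| + |A 0 1| + |A 1 0| + |A 1 1|) * ‖d‖ := by
  have h0 := aux_coord_abs_le_norm d 0
  have h1 := aux_coord_abs_le_norm d 1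
  refine (aux_norm_le_abs_add _).trans ?_
  have e0 : toE2 (A.mulVec d) 0 = A 0 0 * d 0 + A 0 1 * d 1 := aux_mulVec_apply2 A d 0
  have e1 : toE2 (A.mulVec d) 1 = A 1 0 * d 0 + A 1 1 * d 1 := aux_mulVec_apply2 A d 1
  rw [e0, e1]
  have k00 : |A 0 0 * d 0| ≤ |A 0 0| * ‖d‖ := by
    rw [abs_mul]; exact mul_le_mul_of_nonneg_left h0 (abs_nonneg _)
  have k01 : |A 0 1 * d 1| ≤ |A 0 1| * ‖d‖ := by
    rw [abs_mul]; exact mul_le_mul_of_nonneg_left h1 (abs_nonneg _)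
  have k10 : |A 1 0 * d 0| ≤ |A 1 0| * ‖d‖ := by
    rw [abs_mul]; exact mul_le_mul_of_nonneg_left h0 (abs_nonneg _)
  have k11 : |A 1 1 * d 1| ≤ |A 1 1| * ‖d‖ := by
    rw [abs_mul]; exact mul_le_mul_of_nonneg_left h1 (abs_nonneg _)
  have a0 := abs_add_le (A 0 0 * d 0) (A 0 1 * d 1)
  have a1 := abs_add_le (A 1 0 * d 0) (A 1 1 * d 1)
  nlinarith [abs_nonneg (A 0 0 * d 0)]

lemma aux_Tmat_eq (θ χ : ℝ) : TmatM θ χ =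
    !![cos θ ^ 2 + χ * sin θ ^ 2, (1 - χ) * (sin θ * cos θ);
       (1 - χ) * (sin θ * cos θ), sin θ ^ 2 + χ * cos θ ^ 2] := by
  ext i j
  fin_cases i <;> fin_cases j <;>
    simp [TmatM, rotM, Matrix.mul_apply, Fin.sum_univ_two, Matrix.vecHead, Matrix.vecTail] <;>
    ring

lemma aux_abs_sc_le_half (θ : ℝ) : |sin θ * cos θ| ≤ 1 / 2 := by
  have h := sin_sq_add_cos_sq θ
  rw [abs_le]
  constructor <;> nlinarith [sq_nonneg (sin θ - cos θ), sq_nonneg (sin θ + cos θ)]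

lemma aux_abs_one_sub_chi {χ : ℝ} (hχ : χ ∈ Set.Icc (0:ℝ) 1) : |1 - χ| ≤ 1 := by
  rw [abs_le]; constructor <;> [linarith [hχ.2]; linarith [hχ.1]]

lemma aux_T00 (θ χ : ℝ) : TmatM θ χ 0 0 = cos θ ^ 2 + χ * sin θ ^ 2 := by
  rw [aux_Tmat_eq]; simp

lemma aux_T01 (θ χ : ℝ) : TmatM θ χ 0 1 = (1 - χ) * (sin θ * cos θ) := by
  rw [aux_Tmat_eq]; simp

lemma aux_T10 (θ χ : ℝ) : TmatM θ χ 1 0 = (1 - χ) * (sin θ * cos θ) := by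
  rw [aux_Tmat_eq]; simp

lemma aux_T11 (θ χ : ℝ) : TmatM θ χ 1 1 = sin θ ^ 2 + χ * cos θ ^ 2 := by
  rw [aux_Tmat_eq]; simp

/-- Sum of absolute values of the entries of `T(θ)` is at most `3`. -/
lemma aux_T_entries_le (θ χ : ℝ) (hχ : χ ∈ Set.Icc (0:ℝ) 1) :
    |TmatM θ χ 0 0| + |TmatM θ χ 0 1| + |TmatM θ χ 1 0| + |TmatM θ χ 1 1| ≤ 3 := by
  rw [aux_T00, aux_T01, aux_T10, aux_T11]
  have h := sin_sq_add_cos_sq θ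
  have h00 : |cos θ ^ 2 + χ * sin θ ^ 2| ≤ 1 := by
    rw [abs_le]
    constructor <;> nlinarith [sq_nonneg (sin θ), sq_nonneg (cos θ), hχ.1, hχ.2]
  have h11 : |sin θ ^ 2 + χ * cos θ ^ 2| ≤ 1 := by
    rw [abs_le]
    constructor <;> nlinarith [sq_nonneg (sin θ), sq_nonneg (cos θ), hχ.1, hχ.2]
  have h01 : |(1 - χ) * (sin θ * cos θ)| ≤ 1 / 2 := by
    rw [abs_mul]
    have := aux_abs_sc_le_half θ
    have h1χ := aux_abs_one_sub_chi hχ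
    nlinarith [abs_nonneg ((1:ℝ) - χ), abs_nonneg (sin θ * cos θ)]
  linarith

/-- Entrywise Lipschitz bound for `T(θ)` in `θ`. -/
lemma aux_T_entry_diff (θ θb χ : ℝ) (hχ : χ ∈ Set.Icc (0:ℝ) 1) :
    |TmatM θ χ 0 0 - TmatM θb χ 0 0| + |TmatM θ χ 0 1 - TmatM θb χ 0 1|
      + |TmatM θ χ 1 0 - TmatM θb χ 1 0| + |TmatM θ χ 1 1 - TmatM θb χ 1 1|
      ≤ 4 * |θ - θb| := by
  have h1χ : |(1 - χ) / 2| ≤ 1 / 2 := by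
    have := aux_abs_one_sub_chi hχ
    rw [abs_div, show |(2:ℝ)| = 2 from by norm_num]
    linarith
  have hc : |cos (2 * θ) - cos (2 * θb)| ≤ 2 * |θ - θb| := by
    have := aux_abs_cos_sub_cos (2 * θ) (2 * θb)
    rw [show 2 * θ - 2 * θb = 2 * (θ - θb) from by ring, abs_mul] at this
    simpa using this
  have hsn : |sin (2 * θ) - sin (2 * θb)| ≤ 2 * |θ - θb| := by
    have := aux_abs_sin_sub_sin (2 * θ) (2 * θb)
    rw [show 2 * θ - 2 * θb = 2 * (θ - θb) from by ring, abs_mul] at this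
    simpa using this
  have h00 : |TmatM θ χ 0 0 - TmatM θb χ 0 0| ≤ |θ - θb| := by
    rw [aux_T00, aux_T00]
    have e : (cos θ ^ 2 + χ * sin θ ^ 2) - (cos θb ^ 2 + χ * sin θb ^ 2)
        = (1 - χ) / 2 * (cos (2 * θ) - cos (2 * θb)) := by
      rw [sin_sq θ, sin_sq θb, cos_sq θ, cos_sq θb]; ring
    rw [e, abs_mul]
    nlinarith [abs_nonneg ((1 - χ) / 2), abs_nonneg (cos (2 * θ) - cos (2 * θb)),
      abs_nonneg (θ - θb)]
  have h11 : |TmatM θ χ 1 1 - TmatM θb χ 1 1| ≤ |θ - θb| := by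
    rw [aux_T11, aux_T11]
    have e : (sin θ ^ 2 + χ * cos θ ^ 2) - (sin θb ^ 2 + χ * cos θb ^ 2)
        = (1 - χ) / 2 * (cos (2 * θb) - cos (2 * θ)) := by
      rw [sin_sq θ, sin_sq θb, cos_sq θ, cos_sq θb]; ring
    rw [e, abs_mul]
    have hc' : |cos (2 * θb) - cos (2 * θ)| ≤ 2 * |θ - θb| := by
      rw [abs_sub_comm]; exact hc
    nlinarith [abs_nonneg ((1 - χ) / 2), abs_nonneg (cos (2 * θb) - cos (2 * θ)),
      abs_nonneg (θ - θb)]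
  have h01 : |TmatM θ χ 0 1 - TmatM θb χ 0 1| ≤ |θ - θb| := by
    rw [aux_T01, aux_T01]
    have e : (1 - χ) * (sin θ * cos θ) - (1 - χ) * (sin θb * cos θb)
        = (1 - χ) / 2 * (sin (2 * θ) - sin (2 * θb)) := by
      rw [sin_two_mul θ, sin_two_mul θb]; ring
    rw [e, abs_mul]
    nlinarith [abs_nonneg ((1 - χ) / 2), abs_nonneg (sin (2 * θ) - sin (2 * θb)),
      abs_nonneg (θ - θb)]
  have h10 : |TmatM θ χ 1 0 - TmatM θb χ 1 0| ≤ |θ - θb| := by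
    rw [aux_T10, aux_T10]
    have e : (1 - χ) * (sin θ * cos θ) - (1 - χ) * (sin θb * cos θb)
        = (1 - χ) / 2 * (sin (2 * θ) - sin (2 * θb)) := by
      rw [sin_two_mul θ, sin_two_mul θb]; ring
    rw [e, abs_mul]
    nlinarith [abs_nonneg ((1 - χ) / 2), abs_nonneg (sin (2 * θ) - sin (2 * θb)),
      abs_nonneg (θ - θb)]
  linarith

/-- Uniform Lipschitz bound for `η ↦ η f(η s) s` on `[ηmin, ηmax]`. -/
lemma aux_scalar_lip (f : ℝ → ℝ) (M M' ηmin ηmax : ℝ) (hf : ContDiff ℝ 1 f)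
    (hM : ∀ r, |f r| ≤ M) (hM' : ∀ r, |deriv f r| ≤ M')
    (h0 : ∀ r : ℝ, 1 / 2 ≤ r → f r = 0) (hmin : 0 < ηmin) (hmm : ηmin ≤ ηmax)
    (s : ℝ) (hs : 0 ≤ s) {a b : ℝ} (ha : a ∈ Set.Icc ηmin ηmax) (hb : b ∈ Set.Icc ηmin ηmax) :
    |a * f (a * s) * s - b * f (b * s) * s|
      ≤ ((M + ηmax * M' * (1 / (2 * ηmin))) * (1 / (2 * ηmin))) * |a - b| := by
  have hM0 : 0 ≤ M := (abs_nonneg _).trans (hM 0)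
  have hM'0 : 0 ≤ M' := (abs_nonneg _).trans (hM' 0)
  have hmax0 : 0 < ηmax := lt_of_lt_of_le hmin hmm
  have hK0 : 0 ≤ (M + ηmax * M' * (1 / (2 * ηmin))) * (1 / (2 * ηmin)) := by positivity
  by_cases hcase : 1 / (2 * ηmin) ≤ s
  · have hηs : 1 / 2 ≤ ηmin * s := by
      rw [div_le_iff₀ (by positivity)] at hcase
      nlinarith
    have hva : f (a * s) = 0 := h0 _ (by nlinarith [ha.1])
    have hvb : f (b * s) = 0 := h0 _ (by nlinarith [hb.1])
    simp [hva, hvb]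
    positivity
  · push_neg at hcase
    set K := (M + ηmax * M' * (1 / (2 * ηmin))) * (1 / (2 * ηmin)) with hK
    have hfd : Differentiable ℝ f := hf.differentiable one_ne_zero
    have hder : ∀ t : ℝ, HasDerivAt (fun t => t * f (t * s) * s)
        ((f (t * s) + t * (deriv f (t * s) * s)) * s) t := by
      intro t
      have h1 : HasDerivAt (fun t : ℝ => f (t * s)) (deriv f (t * s) * s) t :=
        (hfd (t * s)).hasDerivAt.comp t (hasDerivAt_mul_const s)
      have h2 : HasDerivAt (fun t : ℝ => t * f (t * s))
          (1 * f (t * s) + t * (deriv f (t * s) * s)) t :=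
        (hasDerivAt_id t).mul h1
      simpa using h2.mul_const s
    have hbound : ∀ t ∈ Set.Icc ηmin ηmax,
        ‖(f (t * s) + t * (deriv f (t * s) * s)) * s‖ ≤ K := by
      intro t ht
      rw [Real.norm_eq_abs, abs_mul, abs_of_nonneg hs]
      have h1 : |f (t * s) + t * (deriv f (t * s) * s)| ≤ M + ηmax * M' * (1 / (2 * ηmin)) := by
        refine (abs_add_le _ _).trans ?_
        have e1 : |f (t * s)| ≤ M := hM _
        have e2 : |t * (deriv f (t * s) * s)| ≤ ηmax * M' * (1 / (2 * ηmin)) := by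
          rw [abs_mul, abs_mul]
          have ht0 : 0 ≤ t := le_trans hmin.le ht.1
          rw [abs_of_nonneg ht0, abs_of_nonneg hs, mul_assoc]
          exact mul_le_mul ht.2 (mul_le_mul (hM' _) hcase.le hs hM'0) (by positivity)
            hmax0.le
        linarith
      rw [hK]
      exact mul_le_mul h1 hcase.le hs (by positivity)
    have := Convex.norm_image_sub_le_of_norm_hasDerivWithin_le
      (f := fun t => t * f (t * s) * s)
      (f' := fun t => (f (t * s) + t * (deriv f (t * s) * s)) * s)
      (fun x _ => (hder x).hasDerivWithinAt) hbound (convex_Icc _ _) hb ha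
    simpa [Real.norm_eq_abs] using this

/-- Lipschitz continuity of the total force in the control `(θ,η)`, uniformly in `d`. -/
theorem force_lipschitz_in_control (fR fA : ℝ → ℝ) (χ ηmin ηmax : ℝ)
    (hfRc : ContDiff ℝ 1 fR) (hfAc : ContDiff ℝ 1 fA)
    (hfRb : ∃ M, ∀ r, |fR r| ≤ M) (hfAb : ∃ M, ∀ r, |fA r| ≤ M)
    (hfRd : ∃ M, ∀ r, |deriv fR r| ≤ M) (hfAd : ∃ M, ∀ r, |deriv fA r| ≤ M)
    (hfR0 : ∀ r : ℝ, 1 / 2 ≤ r → fR r = 0) (hfA0 : ∀ r : ℝ, 1 / 2 ≤ r → fA r = 0)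
    (hχ : χ ∈ Set.Icc (0 : ℝ) 1) (hmin : 0 < ηmin) (hminmax : ηmin < ηmax) :
    ∃ Cu > 0, ∀ d : EuclideanSpace ℝ (Fin 2), ∀ θ θbar : ℝ,
      ∀ η ∈ Set.Icc ηmin ηmax, ∀ ηbar ∈ Set.Icc ηmin ηmax,
      ‖forceTot fR fA χ θ η d - forceTot fR fA χ θbar ηbar d‖
        ≤ Cu * (|θ - θbar| + |η - ηbar|) := by
  obtain ⟨MR, hMR⟩ := hfRb
  obtain ⟨MA, hMA⟩ := hfAb
  obtain ⟨MR', hMR'⟩ := hfRd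
  obtain ⟨MA', hMA'⟩ := hfAd
  have hMR0 : 0 ≤ MR := (abs_nonneg _).trans (hMR 0)
  have hMA0 : 0 ≤ MA := (abs_nonneg _).trans (hMA 0)
  have hMR'0 : 0 ≤ MR' := (abs_nonneg _).trans (hMR' 0)
  have hMA'0 : 0 ≤ MA' := (abs_nonneg _).trans (hMA' 0)
  set KR := (MR + ηmax * MR' * (1 / (2 * ηmin))) * (1 / (2 * ηmin)) with hKR
  set KA := (MA + ηmax * MA' * (1 / (2 * ηmin))) * (1 / (2 * ηmin)) with hKA
  have hmax0 : 0 < ηmax := lt_trans hmin hminmax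
  have hKR0 : 0 ≤ KR := by rw [hKR]; positivity
  have hKA0 : 0 ≤ KA := by rw [hKA]; positivity
  refine ⟨KR + 3 * KA + 2 * MA + 1, by positivity, ?_⟩
  intro d θ θb η hη ηb hηb
  set s := ‖d‖ with hsdef
  have hs : 0 ≤ s := norm_nonneg d
  -- repulsion part
  have hR : ‖forceR fR η d - forceR fR ηb d‖ ≤ KR * |η - ηb| := by
    have e : forceR fR η d - forceR fR ηb d
        = (η * fR (η * s) - ηb * fR (ηb * s)) • d := by
      rw [forceR, forceR, sub_smul]
    rw [e, norm_smul, Real.norm_eq_abs]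
    have e2 : |η * fR (η * s) - ηb * fR (ηb * s)| * s
        = |η * fR (η * s) * s - ηb * fR (ηb * s) * s| := by
      rw [show η * fR (η * s) * s - ηb * fR (ηb * s) * s
          = (η * fR (η * s) - ηb * fR (ηb * s)) * s from by ring, abs_mul, abs_of_nonneg hs]
    rw [← hsdef, e2]
    exact aux_scalar_lip fR MR MR' ηmin ηmax hfRc hMR hMR' hfR0 hmin hminmax.le s hs hη hηb
  -- attraction part
  set X := toE2 ((TmatM θ χ).mulVec d) with hX
  set Y := toE2 ((TmatM θb χ).mulVec d) with hY
  set a := η * fA (η * s) with haa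
  set ab := ηb * fA (ηb * s) with hab
  have hXn : ‖X‖ ≤ 3 * s := by
    refine (aux_mulVec_norm_le _ d).trans ?_
    exact mul_le_mul_of_nonneg_right (aux_T_entries_le θ χ hχ) hs
  have hXY : ‖X - Y‖ ≤ 4 * |θ - θb| * s := by
    have e : X - Y = toE2 ((TmatM θ χ - TmatM θb χ).mulVec d) := by
      ext i
      simp [hX, hY, toE2, Matrix.sub_mulVec]
    rw [e]
    refine (aux_mulVec_norm_le _ d).trans ?_
    refine mul_le_mul_of_nonneg_right ?_ hs
    have := aux_T_entry_diff θ θb χ hχ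
    simpa [Matrix.sub_apply] using this
  have habs : |ab| * s ≤ MA / 2 := by
    by_cases hc : 1 / 2 ≤ ηb * s
    · rw [hab, hfA0 _ hc]
      simp
      positivity
    · push_neg at hc
      have hηb0 : 0 ≤ ηb := le_trans hmin.le hηb.1
      rw [hab, abs_mul, abs_of_nonneg hηb0]
      have h1 : |fA (ηb * s)| ≤ MA := hMA _
      have h2 : 0 ≤ ηb * s := mul_nonneg hηb0 hs
      nlinarith [abs_nonneg (fA (ηb * s))]
  have haab : |a - ab| * s ≤ KA * |η - ηb| := by
    have e2 : |a - ab| * s = |η * fA (η * s) * s - ηb * fA (ηb * s) * s| := by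
      rw [haa, hab, show η * fA (η * s) * s - ηb * fA (ηb * s) * s
          = (η * fA (η * s) - ηb * fA (ηb * s)) * s from by ring, abs_mul, abs_of_nonneg hs]
    rw [e2]
    exact aux_scalar_lip fA MA MA' ηmin ηmax hfAc hMA hMA' hfA0 hmin hminmax.le s hs hη hηb
  have hA : ‖forceA fA χ θ η d - forceA fA χ θb ηb d‖
      ≤ 3 * (KA * |η - ηb|) + 2 * MA * |θ - θb| := by
    have e : forceA fA χ θ η d - forceA fA χ θb ηb d
        = (a - ab) • X + ab • (X - Y) := by
      rw [forceA, forceA, sub_smul, smul_sub]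
      rw [← hsdef]
      rw [← haa, ← hab]
      abel
    rw [e]
    refine (norm_add_le _ _).trans ?_
    rw [norm_smul, norm_smul, Real.norm_eq_abs, Real.norm_eq_abs]
    have t1 : |a - ab| * ‖X‖ ≤ 3 * (KA * |η - ηb|) := by
      calc |a - ab| * ‖X‖ ≤ |a - ab| * (3 * s) :=
            mul_le_mul_of_nonneg_left hXn (abs_nonneg _)
        _ = 3 * (|a - ab| * s) := by ring
        _ ≤ 3 * (KA * |η - ηb|) := by linarith
    have t2 : |ab| * ‖X - Y‖ ≤ 2 * MA * |θ - θb| := by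
      calc |ab| * ‖X - Y‖ ≤ |ab| * (4 * |θ - θb| * s) :=
            mul_le_mul_of_nonneg_left hXY (abs_nonneg _)
        _ = 4 * |θ - θb| * (|ab| * s) := by ring
        _ ≤ 4 * |θ - θb| * (MA / 2) := by
            refine mul_le_mul_of_nonneg_left habs (by positivity)
        _ = 2 * MA * |θ - θb| := by ring
    linarith
  -- combine
  have hsplit : forceTot fR fA χ θ η d - forceTot fR fA χ θb ηb d
      = (forceR fR η d - forceR fR ηb d) + (forceA fA χ θ η d - forceA fA χ θb ηb d) := by
    rw [forceTot, forceTot]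
    abel
  rw [hsplit]
  refine (norm_add_le _ _).trans ?_
  have hθ0 := abs_nonneg (θ - θb)
  have hη0 := abs_nonneg (η - ηb)
  nlinarith [hR, hA]
end

section
/- Let N ∈ ℕ, N ≥ 1, let G : ℝ² × ℝ² → ℝ² be bounded with |G(d,p) − G(d̄,p)| ≤ C_d |d − d̄| and |G(d,p) − G(d,p̄)| ≤ C_u |p − p̄| for all arguments, and let u, ū : ℝ² → ℝ² be controls with ū L-Lipschitz and M := sup_x |u(x) − ū(x)| < ∞. Let x and x̄ be continuously differentiable solutions on [0,∞) of the particle systems x_i' = (1/N) Σ_j G(x_i − x_j, u(x_i)) and x̄_i' = (1/N) Σ_j G(x̄_i − x̄_j, ū(x̄_i)) respectively. Then there exist constants a > 0 and b > 0 depending only on C_d, C_u and L (in particular independent of N) such that for all t ≥ 0: (1/N) Σ_{i=1}^N |x_i(t) − x̄_i(t)|² ≤ ((1/N) Σ_{i=1}^N |x_i(0) − x̄_i(0)|² + b M²) · e^{a t}. -/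
open MeasureTheory Set

/-- The plane `ℝ²` with the Euclidean norm. -/
abbrev E2 := EuclideanSpace ℝ (Fin 2)

/-- The right-hand side of the controlled interacting particle system:
`V(x)_i = (1/N) Σ_j G(x_i − x_j, u(x_i))`. -/
noncomputable def pV (N : ℕ) (G : E2 → E2 → E2) (u : E2 → E2)
    (x : Fin N → E2) : Fin N → E2 :=
  fun i => (N : ℝ)⁻¹ • ∑ j : Fin N, G (x i - x j) (u (x i))

/-- Gronwall-type stability estimate for the particle system: there are constants
`a, b > 0` depending only on `C_d`, `C_u` and `L` (in particular independent of `N`)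
such that `(1/N) Σ_i |x_i(t) − x̄_i(t)|² ≤ ((1/N) Σ_i |x_i(0) − x̄_i(0)|² + b M²) e^{at}`. -/
theorem particle_system_stability (Cd Cu L : ℝ)
    (hCd : 0 ≤ Cd) (hCu : 0 ≤ Cu) (hL : 0 ≤ L) :
    ∃ a > (0 : ℝ), ∃ b > (0 : ℝ),
      ∀ (N : ℕ), 1 ≤ N →
      ∀ G : E2 → E2 → E2, (∃ M, ∀ d p, ‖G d p‖ ≤ M) →
      (∀ d dbar p : E2, ‖G d p - G dbar p‖ ≤ Cd * ‖d - dbar‖) →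
      (∀ d p pbar : E2, ‖G d p - G d pbar‖ ≤ Cu * ‖p - pbar‖) →
      ∀ u ubar : E2 → E2, (∀ x y : E2, ‖ubar x - ubar y‖ ≤ L * ‖x - y‖) →
      ∀ M : ℝ, (∀ x : E2, ‖u x - ubar x‖ ≤ M) →
      ∀ x xbar : ℝ → Fin N → E2,
        (∀ t ∈ Ici (0 : ℝ), HasDerivWithinAt x (pV N G u (x t)) (Ici 0) t) →
        (∀ t ∈ Ici (0 : ℝ), HasDerivWithinAt xbar (pV N G ubar (xbar t)) (Ici 0) t) →
        ∀ t ∈ Ici (0 : ℝ),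
          (N : ℝ)⁻¹ * ∑ i : Fin N, ‖x t i - xbar t i‖ ^ 2
            ≤ ((N : ℝ)⁻¹ * ∑ i : Fin N, ‖x 0 i - xbar 0 i‖ ^ 2 + b * M ^ 2)
                * Real.exp (a * t) := by
  have hK : (0:ℝ) < 4*Cd + 2*Cu*L + Cu + 1 := by positivity
  set K : ℝ := 4*Cd + 2*Cu*L + Cu + 1 with hKdef
  refine ⟨K, hK, (Cu+1)/K, by positivity, ?_⟩
  intro N hN G _hGb hGd hGu u ubar hub M hM x xbar hx hxbar t ht
  clear_value K
  have hNpos : (0:ℝ) < (N:ℝ) := by exact_mod_cast hN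
  have hNne : (N:ℝ) ≠ 0 := ne_of_gt hNpos
  have hNinv : (0:ℝ) ≤ (N:ℝ)⁻¹ := by positivity
  have hM0 : (0:ℝ) ≤ M := le_trans (norm_nonneg _) (hM 0)
  set D : ℝ → Fin N → E2 :=
    fun s i => pV N G u (x s) i - pV N G ubar (xbar s) i with hD
  set ψ : ℝ → ℝ := fun s => (N:ℝ)⁻¹ * ∑ i : Fin N, ‖x s i - xbar s i‖^2 with hψdef
  set ψ' : ℝ → ℝ := fun s => (N:ℝ)⁻¹ * ∑ i : Fin N,
      ((inner ℝ (x s i - xbar s i) (D s i) : ℝ) + inner ℝ (D s i) (x s i - xbar s i))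
    with hψ'def
  have hψnonneg : ∀ s, 0 ≤ ψ s := by
    intro s; rw [hψdef]
    exact mul_nonneg hNinv (Finset.sum_nonneg fun i _ => by positivity)
  -- the derivative of ψ
  have hderiv : ∀ s ∈ Ici (0:ℝ), HasDerivWithinAt ψ (ψ' s) (Ici 0) s := by
    intro s hs
    have hcomp : ∀ i : Fin N,
        HasDerivWithinAt (fun r => x r i - xbar r i) (D s i) (Ici 0) s := by
      intro i
      have h1 := (ContinuousLinearMap.proj (R := ℝ) (φ := fun _ : Fin N => E2)
        i).hasFDerivAt.comp_hasDerivWithinAt s (hx s hs)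
      have h2 := (ContinuousLinearMap.proj (R := ℝ) (φ := fun _ : Fin N => E2)
        i).hasFDerivAt.comp_hasDerivWithinAt s (hxbar s hs)
      exact h1.sub h2
    have hsum : HasDerivWithinAt (fun r => ∑ i : Fin N, ‖x r i - xbar r i‖^2)
        (∑ i : Fin N, ((inner ℝ (x s i - xbar s i) (D s i) : ℝ)
          + inner ℝ (D s i) (x s i - xbar s i))) (Ici 0) s := by
      apply HasDerivWithinAt.fun_sum
      intro i _
      have h := (hcomp i).inner ℝ (hcomp i)
      simp only [real_inner_self_eq_norm_sq] at h
      exact h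
    exact hsum.const_mul _
  -- key differential inequality
  have hbound : ∀ s ∈ Ici (0:ℝ), ψ' s ≤ K * ψ s + (Cu+1) * M^2 := by
    intro s _hs
    set S : ℝ := (N:ℝ)⁻¹ * ∑ j : Fin N, ‖x s j - xbar s j‖ with hSdef
    have hS0 : 0 ≤ S := by
      rw [hSdef]
      exact mul_nonneg hNinv (Finset.sum_nonneg fun j _ => norm_nonneg _)
    -- bound on each ‖D s i‖
    have hDle : ∀ i : Fin N, ‖D s i‖
        ≤ (Cd + Cu*L) * ‖x s i - xbar s i‖ + Cd * S + Cu * M := by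
      intro i
      have h1 : D s i = (N:ℝ)⁻¹ • ∑ j : Fin N,
          (G (x s i - x s j) (u (x s i)) - G (xbar s i - xbar s j) (ubar (xbar s i))) := by
        simp [hD, pV, Finset.sum_sub_distrib, smul_sub]
      have hterm : ∀ j : Fin N,
          ‖G (x s i - x s j) (u (x s i)) - G (xbar s i - xbar s j) (ubar (xbar s i))‖
          ≤ Cd * (‖x s i - xbar s i‖ + ‖x s j - xbar s j‖)
            + Cu * (M + L * ‖x s i - xbar s i‖) := by
        intro j
        have tri : ‖G (x s i - x s j) (u (x s i)) - G (xbar s i - xbar s j) (ubar (xbar s i))‖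
            ≤ ‖G (x s i - x s j) (u (x s i)) - G (xbar s i - xbar s j) (u (x s i))‖
              + ‖G (xbar s i - xbar s j) (u (x s i))
                  - G (xbar s i - xbar s j) (ubar (xbar s i))‖ :=
          norm_sub_le_norm_sub_add_norm_sub _ _ _
        have hd : ‖G (x s i - x s j) (u (x s i)) - G (xbar s i - xbar s j) (u (x s i))‖
            ≤ Cd * (‖x s i - xbar s i‖ + ‖x s j - xbar s j‖) := by
          refine (hGd _ _ _).trans ?_
          have e : (x s i - x s j) - (xbar s i - xbar s j)
              = (x s i - xbar s i) - (x s j - xbar s j) := by abel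
          rw [e]
          exact mul_le_mul_of_nonneg_left (norm_sub_le _ _) hCd
        have hu2 : ‖G (xbar s i - xbar s j) (u (x s i))
              - G (xbar s i - xbar s j) (ubar (xbar s i))‖
            ≤ Cu * (M + L * ‖x s i - xbar s i‖) := by
          refine (hGu _ _ _).trans ?_
          refine mul_le_mul_of_nonneg_left ?_ hCu
          calc ‖u (x s i) - ubar (xbar s i)‖
              ≤ ‖u (x s i) - ubar (x s i)‖ + ‖ubar (x s i) - ubar (xbar s i)‖ :=
                norm_sub_le_norm_sub_add_norm_sub _ _ _
            _ ≤ M + L * ‖x s i - xbar s i‖ := add_le_add (hM _) (hub _ _)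
        linarith
      calc ‖D s i‖ = (N:ℝ)⁻¹ * ‖∑ j : Fin N,
            (G (x s i - x s j) (u (x s i)) - G (xbar s i - xbar s j) (ubar (xbar s i)))‖ := by
            rw [h1, norm_smul, Real.norm_eq_abs, abs_of_nonneg hNinv]
        _ ≤ (N:ℝ)⁻¹ * ∑ j : Fin N, (Cd * (‖x s i - xbar s i‖ + ‖x s j - xbar s j‖)
              + Cu * (M + L * ‖x s i - xbar s i‖)) := by
            refine mul_le_mul_of_nonneg_left ?_ hNinv
            exact (norm_sum_le _ _).trans (Finset.sum_le_sum fun j _ => hterm j)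
        _ = (Cd + Cu*L) * ‖x s i - xbar s i‖ + Cd * S + Cu * M := by
            rw [hSdef]
            simp only [Finset.sum_add_distrib, Finset.sum_const, Finset.card_univ,
              Fintype.card_fin, nsmul_eq_mul, mul_add, ← Finset.mul_sum]
            field_simp
            ring
    -- per-particle inner product bound
    have hinner : ∀ i : Fin N,
        (inner ℝ (x s i - xbar s i) (D s i) : ℝ) + inner ℝ (D s i) (x s i - xbar s i)
        ≤ 2 * ((Cd + Cu*L) * ‖x s i - xbar s i‖^2 + Cd * S * ‖x s i - xbar s i‖
            + Cu * M * ‖x s i - xbar s i‖) := by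
      intro i
      have h1 : (inner ℝ (x s i - xbar s i) (D s i) : ℝ)
          ≤ ‖x s i - xbar s i‖ * ‖D s i‖ := real_inner_le_norm _ _
      have h2 : (inner ℝ (D s i) (x s i - xbar s i) : ℝ)
          ≤ ‖D s i‖ * ‖x s i - xbar s i‖ := real_inner_le_norm _ _
      have h3 : ‖D s i‖ * ‖x s i - xbar s i‖
          ≤ ((Cd + Cu*L) * ‖x s i - xbar s i‖ + Cd * S + Cu * M) * ‖x s i - xbar s i‖ :=
        mul_le_mul_of_nonneg_right (hDle i) (norm_nonneg _)
      nlinarith [norm_nonneg (x s i - xbar s i), sq_nonneg (‖x s i - xbar s i‖)]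
    -- sum up
    have hsumle : ψ' s ≤ 2*(Cd + Cu*L) * ψ s + 2*Cd * (S*S) + 2*Cu*M * S := by
      have h4 : ψ' s ≤ (N:ℝ)⁻¹ * ∑ i : Fin N,
          2 * ((Cd + Cu*L) * ‖x s i - xbar s i‖^2 + Cd * S * ‖x s i - xbar s i‖
            + Cu * M * ‖x s i - xbar s i‖) := by
        rw [hψ'def]
        exact mul_le_mul_of_nonneg_left (Finset.sum_le_sum fun i _ => hinner i) hNinv
      refine h4.trans_eq ?_
      have e1 : ∀ i : Fin N, 2 * ((Cd + Cu*L) * ‖x s i - xbar s i‖^2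
            + Cd * S * ‖x s i - xbar s i‖ + Cu * M * ‖x s i - xbar s i‖)
          = 2*(Cd + Cu*L) * ‖x s i - xbar s i‖^2
            + (2*Cd*S + 2*Cu*M) * ‖x s i - xbar s i‖ := fun i => by ring
      calc (N:ℝ)⁻¹ * ∑ i : Fin N,
            2 * ((Cd + Cu*L) * ‖x s i - xbar s i‖^2 + Cd * S * ‖x s i - xbar s i‖
              + Cu * M * ‖x s i - xbar s i‖)
          = (N:ℝ)⁻¹ * (2*(Cd + Cu*L) * (∑ i : Fin N, ‖x s i - xbar s i‖^2)
              + (2*Cd*S + 2*Cu*M) * (∑ i : Fin N, ‖x s i - xbar s i‖)) := by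
            rw [Finset.sum_congr rfl (fun i _ => e1 i), Finset.sum_add_distrib,
              ← Finset.mul_sum, ← Finset.mul_sum]
        _ = 2*(Cd + Cu*L) * ((N:ℝ)⁻¹ * ∑ i : Fin N, ‖x s i - xbar s i‖^2)
              + (2*Cd*S + 2*Cu*M) * ((N:ℝ)⁻¹ * ∑ i : Fin N, ‖x s i - xbar s i‖) := by
            ring
        _ = 2*(Cd + Cu*L) * ψ s + 2*Cd * (S*S) + 2*Cu*M * S := by
            rw [hψdef, ← hSdef]; ring
    have hS2 : S * S ≤ ψ s := by
      have h := sq_sum_le_card_mul_sum_sq (s := Finset.univ)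
        (f := fun j : Fin N => ‖x s j - xbar s j‖)
      simp only [Finset.card_univ, Fintype.card_fin] at h
      have h' : (∑ j : Fin N, ‖x s j - xbar s j‖)^2
          ≤ (N:ℝ) * ∑ j : Fin N, ‖x s j - xbar s j‖^2 := h
      calc S * S = ((N:ℝ)⁻¹ * (N:ℝ)⁻¹) * (∑ j : Fin N, ‖x s j - xbar s j‖)^2 := by
            rw [hSdef]; ring
        _ ≤ ((N:ℝ)⁻¹ * (N:ℝ)⁻¹) * ((N:ℝ) * ∑ j : Fin N, ‖x s j - xbar s j‖^2) :=
            mul_le_mul_of_nonneg_left h' (by positivity)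
        _ = ψ s := by rw [hψdef]; field_simp
    have hMS : 2*M*S ≤ M^2 + S*S := by nlinarith [sq_nonneg (M - S)]
    have e1 : 2*Cd * (S*S) ≤ 2*Cd * ψ s :=
      mul_le_mul_of_nonneg_left hS2 (by positivity)
    have e2 : 2*Cu*M*S ≤ Cu * M^2 + Cu * (S*S) := by
      have := mul_le_mul_of_nonneg_left hMS hCu
      linarith
    have e3 : Cu * (S*S) ≤ Cu * ψ s := mul_le_mul_of_nonneg_left hS2 hCu
    have expand : (4*Cd + 2*Cu*L + Cu) * ψ s
        = 2*(Cd + Cu*L) * ψ s + 2*Cd * ψ s + Cu * ψ s := by ring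
    have step : ψ' s ≤ (4*Cd + 2*Cu*L + Cu) * ψ s + Cu * M^2 := by
      linarith [hsumle, e1, e2, e3, expand]
    have e4 : K * ψ s + (Cu+1)*M^2 - ((4*Cd + 2*Cu*L + Cu) * ψ s + Cu * M^2)
        = ψ s + M^2 := by rw [hKdef]; ring
    linarith [step, e4, hψnonneg s, sq_nonneg M]
  -- Gronwall
  have hcont : ContinuousOn ψ (Icc 0 t) := fun s hs =>
    ((hderiv s hs.1).continuousWithinAt).mono Icc_subset_Ici_self
  have hslope : ∀ s ∈ Ico (0:ℝ) t, ∀ r, ψ' s < r →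
      ∃ᶠ z in nhdsWithin s (Ioi s), (z - s)⁻¹ * (ψ z - ψ s) < r := by
    intro s hs r hr
    have h := ((hderiv s hs.1).mono (Ici_subset_Ici.mpr hs.1)).liminf_right_slope_le hr
    simpa [slope_def_field, div_eq_inv_mul] using h
  have hg := le_gronwallBound_of_liminf_deriv_right_le (f := ψ) (f' := ψ')
    (δ := ψ 0) (K := K) (ε := (Cu+1)*M^2) hcont hslope le_rfl
    (fun s hs => hbound s hs.1) t ⟨ht, le_refl t⟩
  rw [gronwallBound_of_K_ne_0 (ne_of_gt hK)] at hg
  simp only [sub_zero] at hg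
  have hfin : ψ 0 * Real.exp (K*t) + (Cu+1)*M^2 / K * (Real.exp (K*t) - 1)
      ≤ (ψ 0 + (Cu+1)/K * M^2) * Real.exp (K*t) := by
    have hc : (0:ℝ) ≤ (Cu+1)*M^2 / K := by positivity
    have he : Real.exp (K*t) - 1 ≤ Real.exp (K*t) := by linarith
    have hKne : K ≠ 0 := ne_of_gt hK
    have hdiff : (ψ 0 + (Cu+1)/K*M^2) * Real.exp (K*t)
        - (ψ 0 * Real.exp (K*t) + (Cu+1)*M^2/K*(Real.exp (K*t) - 1))
        = (Cu+1)*M^2/K := by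
      field_simp
      ring
    linarith [hc, hdiff]
  exact hg.trans hfin
end
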